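/- Let V be a nonzero subspace of a finite-dimensional inner product space U and let x ∈ U be nonzero. Write x = w + v with w orthogonal to V and v ∈ V. Then the minimum of dist(x,y) over nonzero y ∈ V equals ‖w‖/‖x‖. -/

import Mathlib

/-- The Gram determinant `det (⟪x i, y j⟫)` of two `m`-tuples of vectors.
For pure wedge products `X = x₁ ∧ ⋯ ∧ xₘ` and `Y = y₁ ∧ ⋯ ∧ yₘ` this is the
inner product `⟪X, Y⟫` in `⋀ᵐ U`, for the inner product on `⋀ᵐ U` making
wedge products of orthonormal vectors orthonormal. -/
noncomputable def gramDet (𝕜 : Type*) [RCLike 𝕜] {E : Type*} [NormedAddCommGroup E]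
    [InnerProductSpace 𝕜 E] {m : ℕ} (x y : Fin m → E) : 𝕜 :=
  Matrix.det (Matrix.of fun i j => (inner 𝕜 (x i) (y j) : 𝕜))

/-- The norm `‖x₁ ∧ ⋯ ∧ xₘ‖` of a pure wedge product, computed as the square
root of the Gram determinant. -/
noncomputable def wedgeNorm (𝕜 : Type*) [RCLike 𝕜] {E : Type*} [NormedAddCommGroup E]
    [InnerProductSpace 𝕜 E] {m : ℕ} (x : Fin m → E) : ℝ :=
  Real.sqrt (RCLike.re (gramDet 𝕜 x x))

/-- The projective distance `dist(x,y) = ‖x ∧ y‖ / (‖x‖ ‖y‖)` between two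
nonzero vectors. -/
noncomputable def pdist (𝕜 : Type*) [RCLike 𝕜] {E : Type*} [NormedAddCommGroup E]
    [InnerProductSpace 𝕜 E] (x y : E) : ℝ :=
  wedgeNorm 𝕜 ![x, y] / (‖x‖ * ‖y‖)

/-- The projective distance between the lines spanned by the pure wedge products
`x₁ ∧ ⋯ ∧ xₘ` and `y₁ ∧ ⋯ ∧ yₘ` in `⋀ᵐ U`:
`dist(X,Y) = ‖X ∧ Y‖/(‖X‖‖Y‖) = √(‖X‖²‖Y‖² − |⟪X,Y⟫|²)/(‖X‖‖Y‖)`.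
When `x`, `y` are bases of `m`-dimensional subspaces `V₁`, `V₂`, this is the
projective distance `dist(V₁,V₂)` (it does not depend on the chosen bases). -/
noncomputable def pdistT (𝕜 : Type*) [RCLike 𝕜] {E : Type*} [NormedAddCommGroup E]
    [InnerProductSpace 𝕜 E] {m : ℕ} (x y : Fin m → E) : ℝ :=
  Real.sqrt (RCLike.re (gramDet 𝕜 x x) * RCLike.re (gramDet 𝕜 y y)
      - ‖gramDet 𝕜 x y‖ ^ 2) / (wedgeNorm 𝕜 x * wedgeNorm 𝕜 y)

/-- The distance `dist(x, V)` from a nonzero point to a subspace: the infimum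
(in fact minimum) of `dist(x,y)` over nonzero `y ∈ V`. -/
noncomputable def pdistPV (𝕜 : Type*) [RCLike 𝕜] {E : Type*} [NormedAddCommGroup E]
    [InnerProductSpace 𝕜 E] (x : E) (V : Submodule 𝕜 E) : ℝ :=
  sInf {d : ℝ | ∃ y ∈ V, y ≠ 0 ∧ d = pdist 𝕜 x y}

private lemma pdist_eq {𝕜 : Type*} [RCLike 𝕜] {E : Type*} [NormedAddCommGroup E] [InnerProductSpace 𝕜 E] (x y : E) :
    pdist 𝕜 x y = Real.sqrt (‖x‖^2 * ‖y‖^2 - ‖(inner 𝕜 x y : 𝕜)‖^2) / (‖x‖ * ‖y‖) := by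
  have h : gramDet 𝕜 ![x,y] ![x,y]
      = ((‖x‖^2 * ‖y‖^2 - ‖(inner 𝕜 x y : 𝕜)‖^2 : ℝ) : 𝕜) := by
    simp only [gramDet, Matrix.det_fin_two, Matrix.of_apply, Matrix.cons_val', Matrix.cons_val_zero,
      Matrix.cons_val_one, Matrix.head_cons, Matrix.empty_val', Matrix.cons_val_fin_one]
    rw [inner_self_eq_norm_sq_to_K, inner_self_eq_norm_sq_to_K, ← inner_conj_symm x y,
      RCLike.conj_mul, RCLike.norm_conj, ← inner_conj_symm y x, RCLike.norm_conj]
    push_cast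
    ring
  unfold pdist wedgeNorm
  rw [h, RCLike.ofReal_re]


/-- if `x = w + v` with `w` orthogonal to a nonzero subspace `V`
and `v ∈ V`, then the minimum of `dist(x,y)` over nonzero `y ∈ V` is
`‖w‖/‖x‖`. -/
theorem stmt3 {𝕜 : Type*} [RCLike 𝕜] {E : Type*} [NormedAddCommGroup E]
    [InnerProductSpace 𝕜 E] [FiniteDimensional 𝕜 E]
    (V : Submodule 𝕜 E) (hV : V ≠ ⊥) (x : E) (hx : x ≠ 0)
    (w v : E) (hv : v ∈ V) (hw : ∀ y ∈ V, (inner 𝕜 w y : 𝕜) = 0)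
    (hxwv : x = w + v) :
    IsLeast {d : ℝ | ∃ y ∈ V, y ≠ 0 ∧ d = pdist 𝕜 x y} (‖w‖ / ‖x‖) := by
  have hwv : (inner 𝕜 w v : 𝕜) = 0 := hw v hv
  have hnx : ‖x‖^2 = ‖w‖^2 + ‖v‖^2 := by
    rw [hxwv, @norm_add_sq 𝕜, hwv]; simp
  have hxpos : 0 < ‖x‖ := norm_pos_iff.mpr hx
  constructor
  · by_cases hv0 : v = 0
    · obtain ⟨y, hyV, hy0⟩ := Submodule.exists_mem_ne_zero_of_ne_bot hV
      refine ⟨y, hyV, hy0, ?_⟩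
      have hypos : 0 < ‖y‖ := norm_pos_iff.mpr hy0
      have hxy : (inner 𝕜 x y : 𝕜) = 0 := by
        rw [hxwv, hv0, add_zero]; exact hw y hyV
      have hwx : ‖w‖ = ‖x‖ := by rw [hxwv, hv0, add_zero]
      rw [pdist_eq, hxy, norm_zero, hwx]
      rw [show (0:ℝ)^2 = 0 by ring, sub_zero, show ‖x‖^2*‖y‖^2 = (‖x‖*‖y‖)^2 by ring,
        Real.sqrt_sq (by positivity)]
      field_simp
    · refine ⟨v, hv, hv0, ?_⟩
      have hvpos : 0 < ‖v‖ := norm_pos_iff.mpr hv0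
      have h1 : (inner 𝕜 x v : 𝕜) = ((‖v‖^2 : ℝ) : 𝕜) := by
        rw [hxwv, inner_add_left, hwv, inner_self_eq_norm_sq_to_K]; push_cast; ring
      rw [pdist_eq, h1]
      have h2 : ‖((‖v‖^2 : ℝ) : 𝕜)‖ = ‖v‖^2 := by
        rw [RCLike.norm_ofReal, abs_of_nonneg (by positivity)]
      rw [h2]
      have h3 : ‖x‖^2*‖v‖^2 - (‖v‖^2)^2 = (‖w‖*‖v‖)^2 := by nlinarith [hnx]
      rw [h3, Real.sqrt_sq (by positivity)]
      field_simp
  · rintro d ⟨y, hyV, hy0, rfl⟩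
    have hypos : 0 < ‖y‖ := norm_pos_iff.mpr hy0
    have hxy : (inner 𝕜 x y : 𝕜) = inner 𝕜 v y := by
      rw [hxwv, inner_add_left, hw y hyV, zero_add]
    rw [pdist_eq, hxy]
    have hcs : ‖(inner 𝕜 v y : 𝕜)‖ ≤ ‖v‖*‖y‖ := norm_inner_le_norm v y
    have h2 : (‖w‖*‖y‖)^2 ≤ ‖x‖^2*‖y‖^2 - ‖(inner 𝕜 v y:𝕜)‖^2 := by
      nlinarith [norm_nonneg (inner 𝕜 v y : 𝕜), norm_nonneg v, norm_nonneg y, hnx]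
    have h3 : ‖w‖*‖y‖ ≤ Real.sqrt (‖x‖^2*‖y‖^2 - ‖(inner 𝕜 v y:𝕜)‖^2) := by
      rw [← Real.sqrt_sq (mul_nonneg (norm_nonneg w) (norm_nonneg y))]
      exact Real.sqrt_le_sqrt h2
    rw [div_le_div_iff₀ hxpos (mul_pos hxpos hypos)]
    nlinarith [h3, hxpos.le, norm_nonneg w]
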